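/- Let 0<λ≤1 and let f ∈ 𝒰(λ). If f(z)/z = 1/((1-ω(z))(1-λω(z))) for a Schwarz function ω with coefficients c₁,c₂,c₃, then |2(1+λ)c₃ - 4λc₁c₂| ≤ λ - (1/λ)|(1+λ)c₂ - λc₁²|². -/

import Mathlib

open Metric Complex Topology

lemma key_normSq {lam : ℝ} (hl0 : 0 < lam) {a b : ℂ} (ha : ‖a‖ < lam) (hb : ‖b‖ < lam) :
    ‖(lam:ℂ) * (a - b)‖ < ‖(lam:ℂ)^2 - (starRingEnd ℂ) b * a‖ := by
  have hna : normSq a < lam^2 := by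
    rw [← Complex.sq_norm]
    have : ‖a‖ < lam := ha
    nlinarith [norm_nonneg a]
  have hnb : normSq b < lam^2 := by
    rw [← Complex.sq_norm]
    have : ‖b‖ < lam := hb
    nlinarith [norm_nonneg b]
  have expand : normSq ((lam:ℂ)^2 - (starRingEnd ℂ) b * a) - normSq ((lam:ℂ) * (a - b))
      = (lam^2 - normSq a) * (lam^2 - normSq b) := by
    simp only [Complex.normSq_apply, Complex.sub_re, Complex.sub_im, Complex.mul_re,
      Complex.mul_im, Complex.conj_re, Complex.conj_im, Complex.ofReal_re, Complex.ofReal_im,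
      pow_two]
    ring
  have hlt : normSq ((lam:ℂ) * (a - b)) < normSq ((lam:ℂ)^2 - (starRingEnd ℂ) b * a) := by
    nlinarith
  have h1 : ‖(lam:ℂ) * (a - b)‖ = Real.sqrt (normSq ((lam:ℂ) * (a - b))) := by
    rw [Complex.norm_def]
  have h2 : ‖(lam:ℂ)^2 - (starRingEnd ℂ) b * a‖
      = Real.sqrt (normSq ((lam:ℂ)^2 - (starRingEnd ℂ) b * a)) := by
    rw [Complex.norm_def]
  rw [h1, h2]
  exact Real.sqrt_lt_sqrt (normSq_nonneg _) hlt

lemma schwarz_pick {lam : ℝ} (hl0 : 0 < lam) {g : ℂ → ℂ}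
    (hg : DifferentiableOn ℂ g (ball (0:ℂ) 1))
    (hb : ∀ z ∈ ball (0:ℂ) 1, ‖g z‖ ≤ lam) :
    ‖deriv g 0‖ ≤ lam - (1/lam) * ‖g 0‖^2 := by
  have h0 : (0:ℂ) ∈ ball (0:ℂ) 1 := by simp
  by_cases hstr : ∀ z ∈ ball (0:ℂ) 1, ‖g z‖ < lam
  · -- strict bound case
    set b := g 0 with hbdef
    have hblt : ‖b‖ < lam := hstr 0 h0
    have hden : ∀ z ∈ ball (0:ℂ) 1, (lam:ℂ)^2 - (starRingEnd ℂ) b * g z ≠ 0 := by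
      intro z hz
      intro hcon
      have h1 : ‖(lam:ℂ)^2‖ = ‖(starRingEnd ℂ) b * g z‖ := by
        rw [sub_eq_zero] at hcon; rw [hcon]
      have : ‖(starRingEnd ℂ) b * g z‖ < lam^2 := by
        rw [norm_mul, RCLike.norm_conj]
        calc ‖b‖ * ‖g z‖ ≤ ‖b‖ * lam := by
              exact mul_le_mul_of_nonneg_left (hb z hz) (norm_nonneg _)
          _ < lam * lam := by exact mul_lt_mul_of_pos_right hblt hl0
          _ = lam^2 := by ring
      rw [← h1] at this
      simp [norm_pow, abs_of_pos hl0] at this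
    set H := fun z => ((lam:ℂ) * (g z - b)) / ((lam:ℂ)^2 - (starRingEnd ℂ) b * g z) with hHdef
    have hH0 : H 0 = 0 := by simp [hHdef, hbdef]
    have hHdiff : DifferentiableOn ℂ H (ball (0:ℂ) 1) := by
      apply DifferentiableOn.div
      · exact (hg.sub_const b).const_mul _
      · exact (DifferentiableOn.const_sub (hg.const_mul _) _)
      · exact hden
    have hmaps : Set.MapsTo H (ball (0:ℂ) 1) (ball (H 0) 1) := by
      rw [hH0]
      intro z hz
      simp only [mem_ball, dist_zero_right]
      have hk := key_normSq hl0 (hstr z hz) hblt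
      rw [hHdef]
      simp only
      rw [norm_div]
      rw [div_lt_one (lt_of_le_of_lt (norm_nonneg _) hk)]
      exact hk
    have hS := Complex.norm_deriv_le_div_of_mapsTo_ball hHdiff (hmaps.mono_right ball_subset_closedBall) one_pos
    -- compute deriv H 0
    have hgd : HasDerivAt g (deriv g 0) 0 :=
      (hg.differentiableAt (isOpen_ball.mem_nhds h0)).hasDerivAt
    set d := deriv g 0 with hddef
    have hN : HasDerivAt (fun z => (lam:ℂ) * (g z - b)) ((lam:ℂ) * d) 0 :=
      (hgd.sub_const b).const_mul _
    have hM : HasDerivAt (fun z => (lam:ℂ)^2 - (starRingEnd ℂ) b * g z)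
        (-((starRingEnd ℂ) b * d)) 0 := by
      simpa using (hgd.const_mul ((starRingEnd ℂ) b)).const_sub ((lam:ℂ)^2)
    have hHd : HasDerivAt H
        (((lam:ℂ) * d * ((lam:ℂ)^2 - (starRingEnd ℂ) b * g 0)
          - (lam:ℂ) * (g 0 - b) * (-((starRingEnd ℂ) b * d)))
          / ((lam:ℂ)^2 - (starRingEnd ℂ) b * g 0)^2) 0 := hN.div hM (hden 0 h0)
    have hbb : (starRingEnd ℂ) b * b = (normSq b : ℂ) := by
      rw [mul_comm]; exact Complex.mul_conj b
    have hderivH : deriv H 0 = (lam:ℂ) * d / ((lam:ℂ)^2 - (normSq b : ℂ)) := by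
      rw [hHd.deriv, hbb]
      have hne : (lam:ℂ)^2 - (normSq b:ℂ) ≠ 0 := by
        rw [← hbb]; exact hden 0 h0
      field_simp
      ring
    rw [hderivH] at hS
    have hpos : (0:ℝ) < lam^2 - normSq b := by
      have : normSq b < lam^2 := by
        rw [← Complex.sq_norm]
        have : ‖b‖ < lam := hblt
        nlinarith [norm_nonneg b]
      linarith
    have hnorm : ‖((lam:ℂ) * d / ((lam:ℂ)^2 - (normSq b:ℂ)))‖
        = lam * ‖d‖ / (lam^2 - normSq b) := by
      rw [norm_div, norm_mul]
      have h1 : (lam:ℂ)^2 - (normSq b:ℂ) = ((lam^2 - normSq b : ℝ) : ℂ) := by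
        push_cast; ring
      rw [h1, Complex.norm_real, Complex.norm_real, Real.norm_eq_abs, Real.norm_eq_abs,
        abs_of_pos hl0, abs_of_pos hpos]
    rw [hnorm] at hS
    have hS' : lam * ‖d‖ ≤ lam^2 - normSq b := by
      rw [div_le_iff₀ hpos] at hS
      simpa using hS
    have hb2 : ‖b‖^2 = normSq b := Complex.sq_norm b
    show ‖d‖ ≤ lam - 1/lam * ‖b‖^2
    have h2 : lam - 1/lam * normSq b = (lam^2 - normSq b)/lam := by field_simp
    rw [hb2, h2, le_div_iff₀ hl0]
    linarith [hS', mul_comm lam ‖d‖]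
  · -- max modulus case: g is constant
    push_neg at hstr
    obtain ⟨z₀, hz₀, hge⟩ := hstr
    have heq : ‖g z₀‖ = lam := le_antisymm (hb z₀ hz₀) hge
    have hmax : IsMaxOn (norm ∘ g) (ball (0:ℂ) 1) z₀ := by
      intro z hz
      simp only [Function.comp_apply, Set.mem_setOf_eq]
      rw [heq]; exact hb z hz
    have hconst := Complex.eqOn_of_isPreconnected_of_isMaxOn_norm
      (convex_ball (0:ℂ) 1).isPreconnected isOpen_ball hg hz₀ hmax
    have hg0 : g 0 = g z₀ := hconst h0
    have hd0 : deriv g 0 = 0 := by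
      have hev : g =ᶠ[𝓝 (0:ℂ)] (fun _ => g z₀) :=
        Filter.eventuallyEq_of_mem (isOpen_ball.mem_nhds h0) hconst
      rw [hev.deriv_eq, deriv_const]
    rw [hd0, hg0, heq]
    have : lam - 1/lam * lam^2 = 0 := by field_simp; ring
    rw [this]
    simp
open Metric Complex Topology Filter Nat

theorem third_coeff_inequality (lam : ℝ) (hl0 : 0 < lam) (hl1 : lam ≤ 1)
    (f : ℂ → ℂ)
    (hf : DifferentiableOn ℂ f (ball (0:ℂ) 1))
    (hf0 : f 0 = 0) (hf1 : deriv f 0 = 1)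
    (hU : ∀ z ∈ ball (0:ℂ) 1, z ≠ 0 →
      ‖(z / f z) ^ 2 * deriv f z - 1‖ < lam)
    (ω : ℂ → ℂ)
    (hω : DifferentiableOn ℂ ω (ball (0:ℂ) 1))
    (hω0 : ω 0 = 0)
    (hωb : ∀ z ∈ ball (0:ℂ) 1, ‖ω z‖ < 1)
    (hsub : ∀ z ∈ ball (0:ℂ) 1, f z = z / ((1 - ω z) * (1 - (lam:ℂ) * ω z)))
    (c₁ c₂ c₃ : ℂ)
    (hc₁ : c₁ = deriv ω 0)
    (hc₂ : c₂ = iteratedDeriv 2 ω 0 / 2)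
    (hc₃ : c₃ = iteratedDeriv 3 ω 0 / 6) :
    ‖2 * (1 + (lam:ℂ)) * c₃ - 4 * (lam:ℂ) * c₁ * c₂‖ ≤
      lam - (1 / lam) * ‖(1 + (lam:ℂ)) * c₂ - (lam:ℂ) * c₁ ^ 2‖ ^ 2 := by
  have h0 : (0:ℂ) ∈ ball (0:ℂ) 1 := by simp
  have hωA : AnalyticOnNhd ℂ ω (ball (0:ℂ) 1) := hω.analyticOnNhd isOpen_ball
  set ω1 := deriv ω with hω1def
  set ω2 := deriv ω1 with hω2def
  set ω3 := deriv ω2 with hω3def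
  have hω1A : AnalyticOnNhd ℂ ω1 (ball (0:ℂ) 1) := hωA.deriv
  have hω2A : AnalyticOnNhd ℂ ω2 (ball (0:ℂ) 1) := hω1A.deriv
  have hω3A : AnalyticOnNhd ℂ ω3 (ball (0:ℂ) 1) := hω2A.deriv
  set L : ℂ := (lam : ℂ) with hLdef
  set F : ℂ → ℂ := fun z => (1 - ω z) * (1 - L * ω z) with hFdef
  set F1 : ℂ → ℂ := fun z => -(1+L)*ω1 z + L*(2*ω z*ω1 z) with hF1def
  set F2 : ℂ → ℂ := fun z => -(1+L)*ω2 z + L*(2*(ω1 z*ω1 z + ω z*ω2 z)) with hF2def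
  set F3 : ℂ → ℂ := fun z => -(1+L)*ω3 z + L*(2*(3*ω1 z*ω2 z + ω z*ω3 z)) with hF3def
  set h : ℂ → ℂ := fun z => F z - z * F1 z - 1 with hhdef
  -- pointwise derivatives
  have hderω : ∀ z ∈ ball (0:ℂ) 1, HasDerivAt ω (ω1 z) z :=
    fun z hz => ((hωA z hz).differentiableAt).hasDerivAt
  have hderω1 : ∀ z ∈ ball (0:ℂ) 1, HasDerivAt ω1 (ω2 z) z :=
    fun z hz => ((hω1A z hz).differentiableAt).hasDerivAt
  have hderω2 : ∀ z ∈ ball (0:ℂ) 1, HasDerivAt ω2 (ω3 z) z :=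
    fun z hz => ((hω2A z hz).differentiableAt).hasDerivAt
  have hFd : ∀ z ∈ ball (0:ℂ) 1, HasDerivAt F (F1 z) z := by
    intro z hz
    have h1 : HasDerivAt (fun y => 1 - ω y) (0 - ω1 z) z :=
      (hasDerivAt_const z (1:ℂ)).sub (hderω z hz)
    have h2 : HasDerivAt (fun y => 1 - L * ω y) (0 - L * ω1 z) z :=
      (hasDerivAt_const z (1:ℂ)).sub ((hderω z hz).const_mul L)
    have := h1.mul h2
    refine this.congr_deriv ?_
    simp only [hF1def]
    ring
  have hF1d : ∀ z ∈ ball (0:ℂ) 1, HasDerivAt F1 (F2 z) z := by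
    intro z hz
    have h1 : HasDerivAt (fun y => -(1+L)*ω1 y) (-(1+L)*ω2 z) z :=
      (hderω1 z hz).const_mul _
    have h2 : HasDerivAt (fun y => L*(2*ω y*ω1 y))
        (L*((2*ω1 z)*ω1 z + (2*ω z)*ω2 z)) z :=
      ((((hderω z hz).const_mul 2).mul (hderω1 z hz))).const_mul L
    have := h1.add h2
    refine this.congr_deriv ?_
    simp only [hF2def]
    ring
  have hF2d : ∀ z ∈ ball (0:ℂ) 1, HasDerivAt F2 (F3 z) z := by
    intro z hz
    have h1 : HasDerivAt (fun y => -(1+L)*ω2 y) (-(1+L)*ω3 z) z :=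
      (hderω2 z hz).const_mul _
    have h2 : HasDerivAt (fun y => L*(2*(ω1 y*ω1 y + ω y*ω2 y)))
        (L*(2*((ω2 z*ω1 z + ω1 z*ω2 z) + (ω1 z*ω2 z + ω z*ω3 z)))) z := by
      exact ((((hderω1 z hz).mul (hderω1 z hz)).add
        ((hderω z hz).mul (hderω2 z hz))).const_mul 2).const_mul L
    have := h1.add h2
    refine this.congr_deriv ?_
    simp only [hF3def]
    ring
  have hF3diff : DifferentiableAt ℂ F3 0 := by
    have d0 : DifferentiableAt ℂ ω 0 := (hωA 0 h0).differentiableAt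
    have d1 : DifferentiableAt ℂ ω1 0 := (hω1A 0 h0).differentiableAt
    have d2 : DifferentiableAt ℂ ω2 0 := (hω2A 0 h0).differentiableAt
    have d3 : DifferentiableAt ℂ ω3 0 := (hω3A 0 h0).differentiableAt
    exact (d3.const_mul _).add
      (((((d1.const_mul 3).mul d2).add (d0.mul d3)).const_mul 2).const_mul L)
  have hhd : ∀ z ∈ ball (0:ℂ) 1, HasDerivAt h (-(z * F2 z)) z := by
    intro z hz
    have h1 : HasDerivAt (fun y => y * F1 y) (1 * F1 z + z * F2 z) z :=
      (hasDerivAt_id z).mul (hF1d z hz)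
    have := ((hFd z hz).sub h1).sub_const 1
    refine this.congr_deriv ?_
    ring
  have hEq1 : Set.EqOn (deriv h) (fun z => -(z * F2 z)) (ball (0:ℂ) 1) :=
    fun z hz => (hhd z hz).deriv
  have hEq2 : Set.EqOn (deriv (deriv h)) (fun z => -(F2 z + z * F3 z)) (ball (0:ℂ) 1) := by
    intro z hz
    have e : deriv h =ᶠ[𝓝 z] fun w => -(w * F2 w) :=
      eventuallyEq_of_mem (isOpen_ball.mem_nhds hz) hEq1
    rw [e.deriv_eq]
    have hd : HasDerivAt (fun w => -(w * F2 w)) (-(1 * F2 z + z * F3 z)) z :=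
      ((hasDerivAt_id z).mul (hF2d z hz)).neg
    rw [hd.deriv]
    ring
  -- values at 0
  have hω10 : ω1 0 = c₁ := hc₁.symm
  have hω20 : ω2 0 = 2 * c₂ := by
    have : iteratedDeriv 2 ω 0 = ω2 0 := by
      rw [iteratedDeriv_succ, iteratedDeriv_one]
    rw [this] at hc₂
    rw [hc₂]; ring
  have hω30 : ω3 0 = 6 * c₃ := by
    have : iteratedDeriv 3 ω 0 = ω3 0 := by
      rw [iteratedDeriv_succ, iteratedDeriv_succ, iteratedDeriv_one]
    rw [this] at hc₃
    rw [hc₃]; ring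
  have hh0 : h 0 = 0 := by
    simp [hhdef, hFdef, hω0]
  have hdh0 : deriv h 0 = 0 := by
    rw [(hhd 0 h0).deriv]; simp
  have hF20 : F2 0 = -(1+L)*(2*c₂) + L*(2*(c₁*c₁)) := by
    simp [hF2def, hω0, hω10, hω20]
  have hF30 : F3 0 = -(1+L)*(6*c₃) + L*(2*(3*c₁*(2*c₂))) := by
    simp [hF3def, hω0, hω10, hω20, hω30]
  have hid2 : iteratedDeriv 2 h 0 = -F2 0 := by
    rw [show (2:ℕ) = 1 + 1 from rfl, iteratedDeriv_succ, iteratedDeriv_one]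
    have e : deriv h =ᶠ[𝓝 (0:ℂ)] fun w => -(w * F2 w) :=
      eventuallyEq_of_mem (isOpen_ball.mem_nhds h0) hEq1
    rw [e.deriv_eq]
    have hd : HasDerivAt (fun w => -(w * F2 w)) (-(1 * F2 0 + 0 * F3 0)) 0 :=
      ((hasDerivAt_id 0).mul (hF2d 0 h0)).neg
    rw [hd.deriv]
    ring
  have hid3 : iteratedDeriv 3 h 0 = -(2 * F3 0) := by
    rw [show (3:ℕ) = 2 + 1 from rfl, iteratedDeriv_succ, show (2:ℕ) = 1 + 1 from rfl,
      iteratedDeriv_succ, iteratedDeriv_one]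
    have e : deriv (deriv h) =ᶠ[𝓝 (0:ℂ)] fun w => -(F2 w + w * F3 w) :=
      eventuallyEq_of_mem (isOpen_ball.mem_nhds h0) hEq2
    rw [e.deriv_eq]
    have hd : HasDerivAt (fun w => -(F2 w + w * F3 w))
        (-(F3 0 + (1 * F3 0 + 0 * deriv F3 0))) 0 :=
      ((hF2d 0 h0).add ((hasDerivAt_id 0).mul hF3diff.hasDerivAt)).neg
    rw [hd.deriv]
    ring
  -- h is differentiable and analytic, get the power series
  have hhdiff : DifferentiableOn ℂ h (ball (0:ℂ) 1) :=
    fun z hz => ((hhd z hz).differentiableAt).differentiableWithinAt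
  have hhA : AnalyticAt ℂ h 0 := (hhdiff.analyticOnNhd isOpen_ball) 0 h0
  obtain ⟨q, hq⟩ := hhA
  obtain ⟨r, hr⟩ := hq
  have hcoeff : ∀ n : ℕ, (n ! : ℂ) * q.coeff n = iteratedDeriv n h 0 := by
    intro n
    have h1 := hr.factorial_smul (1:ℂ) n
    rw [iteratedDeriv_eq_iteratedFDeriv, ← h1, nsmul_eq_mul]
    rfl
  have hq' : HasFPowerSeriesAt h q 0 := ⟨r, hr⟩
  set A : ℂ := (1 + L) * c₂ - L * c₁ ^ 2 with hAdef
  set B : ℂ := 2 * (1 + L) * c₃ - 4 * L * c₁ * c₂ with hBdef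
  have hqc2 : q.coeff 2 = A := by
    have := hcoeff 2
    rw [hid2, hF20] at this
    have h2 : ((2:ℕ)! : ℂ) = 2 := by norm_num
    rw [h2] at this
    have : (2:ℂ) * q.coeff 2 = 2 * A := by rw [this, hAdef]; ring
    exact mul_left_cancel₀ two_ne_zero this
  have hqc3 : q.coeff 3 = B := by
    have := hcoeff 3
    rw [hid3, hF30] at this
    have h6 : ((3:ℕ)! : ℂ) = 6 := by norm_num [Nat.factorial]
    rw [h6] at this
    have : (6:ℂ) * q.coeff 3 = 6 * B := by rw [this, hBdef]; ring
    exact mul_left_cancel₀ (by norm_num) this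
  -- define g
  set g : ℂ → ℂ := dslope (dslope h 0) 0 with hgdef
  have hgq : HasFPowerSeriesAt g q.fslope.fslope 0 :=
    (hq'.has_fpower_series_dslope_fslope).has_fpower_series_dslope_fslope
  have hg0 : g 0 = A := by
    have := hgq.coeff_zero (fun _ => 1)
    rw [← this]
    have : q.fslope.fslope.coeff 0 = q.coeff 2 := by
      rw [FormalMultilinearSeries.coeff_fslope, FormalMultilinearSeries.coeff_fslope]
    rw [show q.fslope.fslope 0 (fun _ => 1) = q.fslope.fslope.coeff 0 from rfl, this, hqc2]
  have hgderiv : deriv g 0 = B := by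
    have := hgq.deriv
    rw [this]
    have h1 : q.fslope.fslope.coeff 1 = q.coeff 3 := by
      rw [FormalMultilinearSeries.coeff_fslope, FormalMultilinearSeries.coeff_fslope]
    rw [show q.fslope.fslope 1 (fun _ => 1) = q.fslope.fslope.coeff 1 from rfl, h1, hqc3]
  have hgval : ∀ z : ℂ, z ≠ 0 → g z = h z / z ^ 2 := by
    intro z hz
    rw [hgdef, dslope_of_ne _ hz, slope_def_field, dslope_same, hdh0,
      dslope_of_ne _ hz, slope_def_field, hh0]
    simp only [sub_zero]
    rw [div_div]
    ring
  have hgdiff : DifferentiableOn ℂ g (ball (0:ℂ) 1) := by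
    intro z hz
    by_cases hz0 : z = 0
    · subst hz0
      exact hgq.analyticAt.differentiableAt.differentiableWithinAt
    · have := (hhd z hz).differentiableAt
      exact ((differentiableAt_dslope_of_ne hz0).2
        ((differentiableAt_dslope_of_ne hz0).2 this)).differentiableWithinAt
  -- bound on h
  have hFne : ∀ z ∈ ball (0:ℂ) 1, F z ≠ 0 := by
    intro z hz
    have h1 : (1:ℂ) - ω z ≠ 0 := by
      intro hcon
      have he : ω z = 1 := by linear_combination -hcon
      have hb := hωb z hz
      rw [he] at hb
      simp at hb
    have h2 : (1:ℂ) - L * ω z ≠ 0 := by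
      intro hcon
      have he : L * ω z = 1 := by linear_combination -hcon
      have hn : ‖L * ω z‖ < 1 := by
        rw [norm_mul, hLdef, Complex.norm_real, Real.norm_eq_abs, abs_of_pos hl0]
        calc lam * ‖ω z‖ ≤ 1 * ‖ω z‖ := mul_le_mul_of_nonneg_right hl1 (norm_nonneg _)
          _ = ‖ω z‖ := one_mul _
          _ < 1 := hωb z hz
      rw [he] at hn
      simp at hn
    exact mul_ne_zero h1 h2
  have hbound_h : ∀ z ∈ ball (0:ℂ) 1, z ≠ 0 → ‖h z‖ < lam := by
    intro z hz hz0
    have hFz := hFne z hz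
    have hdf : deriv f z = (1 * F z - z * F1 z) / F z ^ 2 := by
      have e : f =ᶠ[𝓝 z] fun w => w / F w := by
        filter_upwards [isOpen_ball.mem_nhds hz] with w hw
        rw [hsub w hw]
      rw [e.deriv_eq]
      exact ((hasDerivAt_id z).div (hFd z hz) hFz).deriv
    have hzf : z / f z = F z := by
      rw [hsub z hz, show (1 - ω z) * (1 - L * ω z) = F z from rfl,
        div_div_eq_mul_div, mul_comm z (F z), mul_div_assoc, div_self hz0, mul_one]
    have key : (z / f z) ^ 2 * deriv f z - 1 = h z := by
      rw [hzf, hdf, one_mul]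
      have hp2 : F z ^ 2 ≠ 0 := pow_ne_zero 2 hFz
      have : F z ^ 2 * ((F z - z * F1 z) / F z ^ 2) = F z - z * F1 z := by
        rw [mul_comm, div_mul_cancel₀ _ hp2]
      rw [this]
    have := hU z hz hz0
    rwa [key] at this
  have hbound_g : ∀ z ∈ ball (0:ℂ) 1, ‖g z‖ ≤ lam := by
    intro z hz
    have hzlt : ‖z‖ < 1 := mem_ball_zero_iff.1 hz
    have key : ∀ r : ℝ, ‖z‖ < r → r < 1 → ‖g z‖ ≤ lam / r ^ 2 := by
      intro r hr1 hr2
      have hr0 : 0 < r := lt_of_le_of_lt (norm_nonneg z) hr1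
      have hsubset : closedBall (0:ℂ) r ⊆ ball 0 1 := closedBall_subset_ball hr2
      have hdcl : DiffContOnCl ℂ g (ball (0:ℂ) r) := by
        constructor
        · exact hgdiff.mono (ball_subset_ball hr2.le)
        · rw [closure_ball (0:ℂ) (ne_of_gt hr0)]
          exact (hgdiff.mono hsubset).continuousOn
      apply Complex.norm_le_of_forall_mem_frontier_norm_le isBounded_ball hdcl
      · intro w hw
        rw [frontier_ball (0:ℂ) (ne_of_gt hr0)] at hw
        have hwn : ‖w‖ = r := mem_sphere_zero_iff_norm.1 hw
        have hw0 : w ≠ 0 := by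
          intro hcon
          rw [hcon, norm_zero] at hwn
          exact (ne_of_gt hr0) hwn.symm
        have hwball : w ∈ ball (0:ℂ) 1 := mem_ball_zero_iff.2 (hwn ▸ hr2)
        rw [hgval w hw0, norm_div, norm_pow, hwn]
        gcongr
        exact (hbound_h w hwball hw0).le
      · exact subset_closure (mem_ball_zero_iff.2 hr1)
    have htend : Tendsto (fun r : ℝ => lam / r ^ 2) (𝓝[<] (1:ℝ)) (𝓝 lam) := by
      have hc : ContinuousAt (fun r : ℝ => lam / r ^ 2) 1 := by
        apply ContinuousAt.div continuousAt_const ((continuous_pow 2).continuousAt)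
        norm_num
      have h2 : Tendsto (fun r : ℝ => lam / r ^ 2) (𝓝[<] (1:ℝ)) (𝓝 (lam / 1 ^ 2)) :=
        hc.tendsto.mono_left nhdsWithin_le_nhds
      simpa using h2
    have hev : ∀ᶠ r in 𝓝[<] (1:ℝ), ‖g z‖ ≤ lam / r ^ 2 := by
      filter_upwards [Ioo_mem_nhdsLT_of_mem
        (show (1:ℝ) ∈ Set.Ioc ‖z‖ 1 from ⟨hzlt, le_refl 1⟩)] with r hr
      exact key r hr.1 hr.2
    exact ge_of_tendsto htend hev
  have hsp := schwarz_pick hl0 hgdiff hbound_g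
  rw [hgderiv, hg0] at hsp
  exact hsp
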